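/- arXiv:2011.03768 — 5 statements merged into one kernel-verified Lean document; each statement's English description precedes it below -/
import Mathlib

section
/- Let A be an f-algebra with identity element e, and let E be a vector lattice with the principal projection property. Let a be a positive element of A, and suppose that π from the linear span of {e, a, a²} to the order bounded linear operators on E is a positive linear map with π(e) = I (the identity operator). Then π(a) is an orthomorphism on E (i.e., π(a) is order bounded and band preserving). -/
open Filter

section Defs

variable {E : Type*} [Lattice E] [AddCommGroup E]
  [CovariantClass E E (· + ·) (· ≤ ·)]

/-- Order convergence of a net, via a downward directed set of dominating elements
with infimum `0` (equivalent to the usual definition with an auxiliary net `y_β ↓ 0`). -/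
def OrderTendsto {ι : Type*} [Preorder ι] (x : ι → E) (l : E) : Prop :=
  ∃ D : Set E, D.Nonempty ∧ DirectedOn (· ≥ ·) D ∧ IsGLB D 0 ∧
    ∀ d ∈ D, ∃ a0 : ι, ∀ a : ι, a0 ≤ a → |x a - l| ≤ d

/-- Unbounded order convergence of a net. -/
def UOTendsto {ι : Type*} [Preorder ι] (x : ι → E) (l : E) : Prop :=
  ∀ y : E, 0 ≤ y → OrderTendsto (fun a => |x a - l| ⊓ y) 0

/-- Dedekind completeness. -/
def DedekindComplete (E : Type*) [Preorder E] : Prop :=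
  ∀ s : Set E, s.Nonempty → BddAbove s → ∃ u, IsLUB s u

variable [Module ℝ E]

/-- An order bounded linear operator. -/
def IsOrderBoundedMap (f : E →ₗ[ℝ] E) : Prop :=
  ∀ x : E, 0 ≤ x → ∃ b : E, ∀ y ∈ Set.Icc (-x) x, |f y| ≤ b

/-- An orthomorphism: an order bounded, band preserving linear operator. -/
def IsOrthomorphism (f : E →ₗ[ℝ] E) : Prop :=
  IsOrderBoundedMap f ∧ ∀ x y : E, |x| ⊓ |y| = 0 → |f x| ⊓ |y| = 0

/-- An order continuous linear operator. -/
def IsOrderContinuousMap (f : E →ₗ[ℝ] E) : Prop :=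
  ∀ {ι : Type*} [Preorder ι] (x : ι → E) (l : E),
    OrderTendsto x l → OrderTendsto (fun a => f (x a)) (f l)

end Defs

section Stmt0Aux
set_option linter.unusedSectionVars false

section
variable {A : Type*} [Lattice A] [Ring A] [CovariantClass A A (· + ·) (· ≤ ·)]

lemma stmt0_inf_identity {G : Type*} [Lattice G] [AddCommGroup G]
    [CovariantClass G G (· + ·) (· ≤ ·)] (a b : G) : a ⊓ b = a - (a - b)⁺ := by
  rw [posPart_def, sub_sup, sub_sub_cancel, sub_zero, inf_comm]

lemma stmt0_mul_eq_zero
    (hf : ∀ a b c : A, a ⊓ b = 0 → 0 ≤ c → (c * a) ⊓ b = 0 ∧ (a * c) ⊓ b = 0)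
    (u v : A) (hu : 0 ≤ u) (hv : 0 ≤ v) (h : u ⊓ v = 0) : u * v = 0 := by
  have h1 : (u * v) ⊓ v = 0 := (hf u v v h hv).2
  have h2 : (u * v) ⊓ (u * v) = 0 := (hf v (u * v) u (by rw [inf_comm]; exact h1) hu).1
  simpa [inf_idem] using h2

lemma stmt0_one_nonneg
    (hmul_pos : ∀ a b : A, 0 ≤ a → 0 ≤ b → 0 ≤ a * b)
    (hf : ∀ a b c : A, a ⊓ b = 0 → 0 ≤ c → (c * a) ⊓ b = 0 ∧ (a * c) ⊓ b = 0) :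
    (0 : A) ≤ 1 := by
  have hpq : (1 : A)⁺ * (1 : A)⁻ = 0 :=
    stmt0_mul_eq_zero hf _ _ (posPart_nonneg _) (negPart_nonneg _) (posPart_inf_negPart_eq_zero _)
  have hone : (1 : A) = (1 : A)⁺ - (1 : A)⁻ := (posPart_sub_negPart 1).symm
  have hsq : (0 : A) ≤ (1 : A)⁻ * (1 : A)⁻ :=
    hmul_pos _ _ (negPart_nonneg _) (negPart_nonneg _)
  have h1 : (1 : A)⁻ = (1 : A)⁺ * (1 : A)⁻ - (1 : A)⁻ * (1 : A)⁻ := by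
    calc (1 : A)⁻ = 1 * (1 : A)⁻ := (one_mul _).symm
      _ = ((1 : A)⁺ - (1 : A)⁻) * (1 : A)⁻ := by rw [← hone]
      _ = (1 : A)⁺ * (1 : A)⁻ - (1 : A)⁻ * (1 : A)⁻ := sub_mul _ _ _
  have hq0 : (1 : A)⁻ ≤ 0 := by
    rw [h1, hpq, zero_sub]
    have h2 := add_le_add_left hsq (-((1 : A)⁻ * (1 : A)⁻))
    simpa using h2
  have hqz : (1 : A)⁻ = 0 := le_antisymm hq0 (negPart_nonneg _)
  calc (0:A) ≤ (1 : A)⁺ := posPart_nonneg _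
    _ = 1 := (hone.trans (by rw [hqz, sub_zero])).symm

lemma stmt0_key
    (hmul_pos : ∀ a b : A, 0 ≤ a → 0 ≤ b → 0 ≤ a * b)
    (hf : ∀ a b c : A, a ⊓ b = 0 → 0 ≤ c → (c * a) ⊓ b = 0 ∧ (a * c) ⊓ b = 0)
    (a : A) (ha : 0 ≤ a) (n : ℕ) : n • a ≤ (n * n) • (1 : A) + a * a := by
  set b := (a - n • (1 : A))⁺ with hbdef
  set c := (a - n • (1 : A))⁻ with hcdef
  have hbc : b ⊓ c = 0 := posPart_inf_negPart_eq_zero _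
  have hb0 : 0 ≤ b := posPart_nonneg _
  have hc0 : 0 ≤ c := negPart_nonneg _
  have hcb0 : c * b = 0 :=
    stmt0_mul_eq_zero hf c b hc0 hb0 (by rw [inf_comm]; exact hbc)
  have hsplit : a = b - c + n • (1 : A) := by
    rw [hbdef, hcdef, posPart_sub_negPart]; abel
  have hinf : a ⊓ (n • (1 : A)) = a - b := by rw [stmt0_inf_identity, hbdef]
  have hba : b ≤ a := by
    have h0 : 0 ≤ a ⊓ (n • (1 : A)) :=
      le_inf ha (nsmul_nonneg (stmt0_one_nonneg hmul_pos hf) n)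
    rw [hinf] at h0; exact sub_nonneg.1 h0
  have hab : a * b = b * b + n • b := by
    calc a * b = (b - c + n • (1 : A)) * b := by rw [← hsplit]
      _ = b * b - c * b + (n • (1 : A)) * b := by rw [add_mul, sub_mul]
      _ = b * b + n • b := by rw [hcb0, sub_zero, nsmul_eq_mul, nsmul_eq_mul, mul_one]
  have h1 : n • b ≤ a * b := by
    rw [hab]; exact le_add_of_nonneg_left (hmul_pos b b hb0 hb0)
  have h2 : a * b ≤ a * a := by
    have h := hmul_pos a (a - b) ha (sub_nonneg.2 hba)
    rw [mul_sub] at h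
    exact sub_nonneg.1 h
  have h3 : n • (a ⊓ (n • (1 : A))) ≤ (n * n) • (1 : A) := by
    rw [mul_comm, mul_nsmul]
    exact nsmul_le_nsmul_right inf_le_right n
  have h4 : n • a = n • (a ⊓ (n • (1 : A))) + n • b := by
    rw [← smul_add]
    congr 1
    rw [hinf]; abel
  rw [h4]
  exact add_le_add h3 (h1.trans h2)
end


section
variable {G : Type*} [Lattice G] [AddCommGroup G] [CovariantClass G G (· + ·) (· ≤ ·)]

lemma stmt0_inf_add_le (u v w : G) (hu : 0 ≤ u) (hv : 0 ≤ v) (hw : 0 ≤ w) :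
    (u + v) ⊓ w ≤ u ⊓ w + v ⊓ w := by
  have h1 : (u + v) ⊓ w ≤ u ⊓ w + v := by
    rw [← sub_le_iff_le_add]
    refine le_inf ?_ ?_
    · exact sub_le_iff_le_add.2 (inf_le_left.trans (by rw [add_comm]))
    · exact sub_le_iff_le_add.2 (inf_le_right.trans (le_add_of_nonneg_right hv))
  have h2 : (u + v) ⊓ w ≤ u ⊓ w + w :=
    inf_le_right.trans (le_add_of_nonneg_left (le_inf hu hw))
  calc (u + v) ⊓ w ≤ (u ⊓ w + v) ⊓ (u ⊓ w + w) := le_inf h1 h2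
    _ = u ⊓ w + v ⊓ w := (add_inf _ _ _).symm

lemma stmt0_nsmul_inf (x y : G) (hx : 0 ≤ x) (hy : 0 ≤ y) (h : x ⊓ y = 0) (n : ℕ) :
    (n • x) ⊓ y = 0 := by
  induction n with
  | zero => simpa using inf_eq_right.2 hy
  | succ n ih =>
    refine le_antisymm ?_ (le_inf (nsmul_nonneg hx _) hy)
    calc ((n + 1) • x) ⊓ y = (n • x + x) ⊓ y := by rw [succ_nsmul]
      _ ≤ (n • x) ⊓ y + x ⊓ y := stmt0_inf_add_le _ _ _ (nsmul_nonneg hx n) hx hy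
      _ = 0 := by rw [ih, h, add_zero]

lemma stmt0_nsmul_inf_nsmul (x y : G) (hx : 0 ≤ x) (hy : 0 ≤ y) (h : x ⊓ y = 0) (m n : ℕ) :
    (m • x) ⊓ (n • y) = 0 := by
  have h1 : y ⊓ (m • x) = 0 := by rw [inf_comm]; exact stmt0_nsmul_inf x y hx hy h m
  have h2 := stmt0_nsmul_inf y (m • x) hy (nsmul_nonneg hx m) h1 n
  rw [inf_comm] at h2; exact h2

/-- Archimedean-type property from the principal projection property hypothesis. -/
lemma stmt0_arch
    (hppp : ∀ x y : G, 0 ≤ y → ∃ s : G, IsLUB {z | ∃ n : ℕ, z = y ⊓ (n • |x|)} s)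
    (u v : G) (hu : 0 ≤ u) (hv : 0 ≤ v) (hb : ∀ n : ℕ, n • u ≤ v) : u = 0 := by
  obtain ⟨s, hs⟩ := hppp u v hv
  have habs : |u| = u := abs_of_nonneg hu
  have hset : ∀ n : ℕ, v ⊓ (n • |u|) = n • u := by
    intro n
    rw [habs, inf_eq_right.2 (hb n)]
  have hub : ∀ n : ℕ, n • u ≤ s := fun n => hs.1 ⟨n, (hset n).symm⟩
  have hs2 : s ≤ s - u := by
    refine hs.2 fun z hz => ?_
    obtain ⟨n, rfl⟩ := hz
    rw [hset n, le_sub_iff_add_le, ← succ_nsmul]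
    exact hub (n + 1)
  have : u ≤ 0 := by
    have := sub_nonneg.2 hs2
    simpa using this
  exact le_antisymm this hu
end


lemma stmt0_posPart_le_abs {G : Type*} [Lattice G] [AddCommGroup G]
    [CovariantClass G G (· + ·) (· ≤ ·)] (a : G) : a⁺ ≤ |a| :=
  posPart_def a ▸ sup_le (le_abs_self a) (abs_nonneg a)

lemma stmt0_negPart_le_abs {G : Type*} [Lattice G] [AddCommGroup G]
    [CovariantClass G G (· + ·) (· ≤ ·)] (a : G) : a⁻ ≤ |a| :=
  negPart_def a ▸ sup_le (neg_le_abs a) (abs_nonneg a)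


end Stmt0Aux


/-- Let `A` be an `f`-algebra with identity element `e = 1`, and `E` a
vector lattice with the principal projection property (expressed via existence of the
sups `⨆ n, y ⊓ n|x|` giving the band projections).  If `π` is a positive linear map
from `span {1, a, a²}` into the order bounded operators on `E` with `π 1 = I`, where
`0 ≤ a`, then `π a` is an orthomorphism on `E`. -/
theorem stmt0 {A E : Type*}
    [Lattice A] [Ring A] [Module ℝ A] [CovariantClass A A (· + ·) (· ≤ ·)]
    -- `A` is an `f`-algebra:
    (hmul_pos : ∀ a b : A, 0 ≤ a → 0 ≤ b → 0 ≤ a * b)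
    (hf : ∀ a b c : A, a ⊓ b = 0 → 0 ≤ c → (c * a) ⊓ b = 0 ∧ (a * c) ⊓ b = 0)
    [Lattice E] [AddCommGroup E] [CovariantClass E E (· + ·) (· ≤ ·)] [Module ℝ E]
    -- `E` has the principal projection property:
    (hppp : ∀ x y : E, 0 ≤ y → ∃ s : E, IsLUB {z | ∃ n : ℕ, z = y ⊓ (n • |x|)} s)
    (a : A) (ha : 0 ≤ a)
    (π : ↥(Submodule.span ℝ ({1, a, a * a} : Set A)) →ₗ[ℝ] E →ₗ[ℝ] E)
    (hπpos : ∀ v : Submodule.span ℝ ({1, a, a * a} : Set A), 0 ≤ (v : A) →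
      ∀ x : E, 0 ≤ x → 0 ≤ π v x)
    (hπob : ∀ v, IsOrderBoundedMap (π v))
    (hπ1 : π ⟨1, Submodule.subset_span (by simp)⟩ = LinearMap.id) :
    IsOrthomorphism (π ⟨a, Submodule.subset_span (by simp)⟩) := by
  -- the three generators as elements of the span
  set v1 : Submodule.span ℝ ({1, a, a * a} : Set A) :=
    ⟨1, Submodule.subset_span (by simp)⟩ with hv1
  set va : Submodule.span ℝ ({1, a, a * a} : Set A) :=
    ⟨a, Submodule.subset_span (by simp)⟩ with hva
  set vaa : Submodule.span ℝ ({1, a, a * a} : Set A) :=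
    ⟨a * a, Submodule.subset_span (by simp)⟩ with hvaa
  set T := π va with hT
  set S := π vaa with hS
  have hkeyA : ∀ n : ℕ, n • a ≤ (n * n) • (1 : A) + a * a :=
    stmt0_key hmul_pos hf a ha
  have hTpos : ∀ x : E, 0 ≤ x → 0 ≤ T x := fun x hx => hπpos va ha x hx
  have hSpos : ∀ x : E, 0 ≤ x → 0 ≤ S x :=
    fun x hx => hπpos vaa (hmul_pos a a ha ha) x hx
  -- the operator inequality
  have hkeyE : ∀ (n : ℕ) (x : E), 0 ≤ x → n • (T x) ≤ (n * n) • x + S x := by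
    intro n x hx
    set w : Submodule.span ℝ ({1, a, a * a} : Set A) := (n * n) • v1 + vaa - n • va with hw
    have hwco : (w : A) = (n * n) • (1 : A) + a * a - n • a := by
      push_cast [hw]
      rfl
    have h0 : 0 ≤ (w : A) := by rw [hwco]; exact sub_nonneg.2 (hkeyA n)
    have h1 := hπpos w h0 x hx
    have h2 : π w x = (n * n) • x + S x - n • (T x) := by
      rw [hw, map_sub, map_add, map_nsmul, map_nsmul, hπ1]
      simp only [hS, hT, LinearMap.sub_apply, LinearMap.add_apply, LinearMap.smul_apply,
        LinearMap.id_apply]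
    rw [h2] at h1
    exact sub_nonneg.1 h1
  -- main disjointness step for positive elements
  have main : ∀ x y : E, 0 ≤ x → 0 ≤ y → x ⊓ y = 0 → (T x) ⊓ y = 0 := by
    intro x y hx hy hxy
    have hu0 : 0 ≤ T x ⊓ y := le_inf (hTpos x hx) hy
    have hSx : 0 ≤ S x := hSpos x hx
    refine stmt0_arch hppp (T x ⊓ y) (S x) hu0 hSx fun n => ?_
    have h1 : n • (T x ⊓ y) ≤ ((n * n) • x + S x) ⊓ (n • y) :=
      le_inf ((nsmul_le_nsmul_right inf_le_left n).trans (hkeyE n x hx))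
        (nsmul_le_nsmul_right inf_le_right n)
    have h2 : ((n * n) • x + S x) ⊓ (n • y) ≤ ((n * n) • x) ⊓ (n • y) + (S x) ⊓ (n • y) :=
      stmt0_inf_add_le _ _ _ (nsmul_nonneg hx _) hSx (nsmul_nonneg hy n)
    have h3 : ((n * n) • x) ⊓ (n • y) = 0 := stmt0_nsmul_inf_nsmul x y hx hy hxy _ n
    calc n • (T x ⊓ y) ≤ ((n * n) • x) ⊓ (n • y) + (S x) ⊓ (n • y) := h1.trans h2
      _ = (S x) ⊓ (n • y) := by rw [h3, zero_add]
      _ ≤ S x := inf_le_left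
  -- conclude
  refine ⟨hπob va, fun x y hxy => ?_⟩
  have hy0 : (0:E) ≤ |y| := abs_nonneg y
  have hp : x⁺ ⊓ |y| = 0 := by
    refine le_antisymm ?_ (le_inf (posPart_nonneg x) hy0)
    calc x⁺ ⊓ |y| ≤ |x| ⊓ |y| := inf_le_inf_right _ (stmt0_posPart_le_abs x)
      _ = 0 := hxy
  have hq : x⁻ ⊓ |y| = 0 := by
    refine le_antisymm ?_ (le_inf (negPart_nonneg x) hy0)
    calc x⁻ ⊓ |y| ≤ |x| ⊓ |y| := inf_le_inf_right _ (stmt0_negPart_le_abs x)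
      _ = 0 := hxy
  have h1 := main x⁺ |y| (posPart_nonneg x) hy0 hp
  have h2 := main x⁻ |y| (negPart_nonneg x) hy0 hq
  have habs : |T x| ≤ T x⁺ + T x⁻ := by
    have hx : T x = T x⁺ - T x⁻ := by rw [← map_sub, posPart_sub_negPart]
    calc |T x| = |T x⁺ + -(T x⁻)| := by rw [hx, sub_eq_add_neg]
      _ ≤ |T x⁺| + |-(T x⁻)| := abs_add_le _ _
      _ = T x⁺ + T x⁻ := by
          rw [abs_neg, abs_of_nonneg (hTpos _ (posPart_nonneg x)),
            abs_of_nonneg (hTpos _ (negPart_nonneg x))]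
  refine le_antisymm ?_ (le_inf (abs_nonneg _) hy0)
  calc |T x| ⊓ |y| ≤ (T x⁺ + T x⁻) ⊓ |y| := inf_le_inf_right _ habs
    _ ≤ T x⁺ ⊓ |y| + T x⁻ ⊓ |y| :=
        stmt0_inf_add_le _ _ _ (hTpos _ (posPart_nonneg x)) (hTpos _ (negPart_nonneg x)) hy0
    _ = 0 := by rw [h1, h2, add_zero]
end

section
/- Let A be an f-algebra with identity element e, and let E be a vector lattice with the principal projection property. Suppose π : A → L_ob(E) is a positive linear map with π(e) = I. Then π(A) is contained in Orth(E), the orthomorphisms on E. -/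
open Filter

section Aux
variable {G : Type*} [Lattice G] [AddCommGroup G] [CovariantClass G G (· + ·) (· ≤ ·)]

lemma riesz_inf' (u₁ u₂ v : G) (h₁ : 0 ≤ u₁) (h₂ : 0 ≤ u₂) (hv : 0 ≤ v) :
    (u₁ + u₂) ⊓ v ≤ u₁ ⊓ v + u₂ ⊓ v := by
  have key : (u₁ + u₂) ⊓ v - u₁ ⊓ v ≤ u₂ ⊓ v := by
    rw [sub_inf]
    apply sup_le
    · apply le_inf
      · rw [sub_le_iff_le_add, add_comm]
        exact inf_le_left
      · exact le_trans (sub_le_self _ h₁) inf_le_right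
    · exact le_trans (sub_nonpos.mpr inf_le_right) (le_inf h₂ hv)
  exact sub_le_iff_le_add'.mp key

lemma nsmul_inf_zero' {u v : G} (hu : 0 ≤ u) (hv : 0 ≤ v) (h : u ⊓ v = 0) (n : ℕ) :
    (n • u) ⊓ v = 0 := by
  induction n with
  | zero => simpa using inf_eq_left.mpr hv
  | succ n ih =>
    have h1 : ((n + 1) • u) ⊓ v ≤ (n • u) ⊓ v + u ⊓ v := by
      rw [succ_nsmul]
      exact riesz_inf' _ _ _ (nsmul_nonneg hu n) hu hv
    rw [ih, h, add_zero] at h1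
    exact le_antisymm h1 (le_inf (nsmul_nonneg hu _) hv)

end Aux


/-- Let `A` be an `f`-algebra with identity element `1`, and `E` a
vector lattice with the principal projection property.  If `π : A → L_ob(E)` is a
positive linear map with `π 1 = I`, then `π(A) ⊆ Orth(E)`. -/
theorem stmt1 {A E : Type*}
    [Lattice A] [Ring A] [Module ℝ A] [CovariantClass A A (· + ·) (· ≤ ·)]
    -- `A` is an `f`-algebra:
    (hmul_pos : ∀ a b : A, 0 ≤ a → 0 ≤ b → 0 ≤ a * b)
    (hf : ∀ a b c : A, a ⊓ b = 0 → 0 ≤ c → (c * a) ⊓ b = 0 ∧ (a * c) ⊓ b = 0)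
    [Lattice E] [AddCommGroup E] [CovariantClass E E (· + ·) (· ≤ ·)] [Module ℝ E]
    -- `E` has the principal projection property:
    (hppp : ∀ x y : E, 0 ≤ y → ∃ s : E, IsLUB {z | ∃ n : ℕ, z = y ⊓ (n • |x|)} s)
    (π : A →ₗ[ℝ] E →ₗ[ℝ] E)
    (hπpos : ∀ a : A, 0 ≤ a → ∀ x : E, 0 ≤ x → 0 ≤ π a x)
    (hπob : ∀ a : A, IsOrderBoundedMap (π a))
    (hπ1 : π 1 = LinearMap.id) :
    ∀ a : A, IsOrthomorphism (π a) := by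
  have main : ∀ a : A, ∀ x y : E, |x| ⊓ |y| = 0 → |π a x| ⊓ |y| = 0 := by
    intro a
    -- `1 ≥ 0` in `A`
    have hone : (0 : A) ≤ 1 := by
      have hpm : (1 : A)⁺ ⊓ (1 : A)⁻ = 0 := posPart_inf_negPart_eq_zero 1
      have hneg : (0 : A) ≤ (1 : A)⁻ := negPart_nonneg 1
      have h1 := (hf ((1 : A)⁺) ((1 : A)⁻) ((1 : A)⁻) hpm hneg).1
      have hle : (1 : A)⁻ ≤ (1 : A)⁻ * (1 : A)⁺ := by
        have hv : (0 : A) ≤ (1 : A)⁻ * (1 : A)⁻ := hmul_pos _ _ hneg hneg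
        have heq : (1 : A)⁻ = (1 : A)⁻ * (1 : A)⁺ - (1 : A)⁻ * (1 : A)⁻ := by
          rw [← mul_sub, posPart_sub_negPart, mul_one]
        exact heq.le.trans (sub_le_self _ hv)
      have hz : (1 : A)⁻ = 0 := by
        have := inf_eq_right.mpr hle
        rw [h1] at this
        exact this.symm
      have := posPart_sub_negPart (1 : A)
      rw [hz, sub_zero] at this
      rw [← this]
      exact posPart_nonneg 1
    -- disjoint elements have zero product
    have hdz : ∀ x y : A, 0 ≤ x → 0 ≤ y → x ⊓ y = 0 → y * x = 0 := by
      intro x y hx hy h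
      have hyx : y ⊓ x = 0 := by rw [inf_comm]; exact h
      have h1 : (y * x) ⊓ x = 0 := (hf y x x hyx hx).2
      have h2 : x ⊓ (y * x) = 0 := by rw [inf_comm]; exact h1
      have h3 : (y * x) ⊓ (y * x) = 0 := (hf x (y * x) y h2 hy).1
      simpa using h3
    -- monotonicity of π b for b ≥ 0
    have hπmono : ∀ b : A, 0 ≤ b → ∀ p q : E, p ≤ q → π b p ≤ π b q := by
      intro b hb p q hpq
      have := hπpos b hb (q - p) (sub_nonneg.mpr hpq)
      rw [map_sub] at this
      exact sub_nonneg.mp this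
    have hπle : ∀ b c : A, b ≤ c → ∀ x : E, 0 ≤ x → π b x ≤ π c x := by
      intro b c hbc x hx
      have := hπpos (c - b) (sub_nonneg.mpr hbc) x hx
      rw [map_sub, LinearMap.sub_apply] at this
      exact sub_nonneg.mp this
    -- core claim
    have core : ∀ b : A, 0 ≤ b → ∀ u v : E, 0 ≤ u → 0 ≤ v → u ⊓ v = 0 → (π b u) ⊓ v = 0 := by
      intro b hb u v hu hv huv
      have hwpos : 0 ≤ π (b * b) u := hπpos _ (hmul_pos b b hb hb) u hu
      have hz0 : 0 ≤ (π b u) ⊓ v := le_inf (hπpos b hb u hu) hv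
      have hnz : ∀ n : ℕ, n • ((π b u) ⊓ v) ≤ π (b * b) u := by
        intro n
        have hncast : ((n : A)) = n • (1 : A) := by rw [nsmul_eq_mul, mul_one]
        have hn0 : (0 : A) ≤ (n : A) := by rw [hncast]; exact nsmul_nonneg hone n
        set c := b ⊓ (n : A) with hc
        set d := (b - (n : A))⁺ with hd
        set e := (b - (n : A))⁻ with he
        have hc0 : 0 ≤ c := le_inf hb hn0
        have hd0 : 0 ≤ d := posPart_nonneg _
        have he0 : 0 ≤ e := negPart_nonneg _
        have hbd : b - c = d := by
          rw [hc, sub_inf, sub_self, hd, posPart_def, sup_comm]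
        have hcd : c + d = b := by rw [← hbd, add_sub_cancel]
        have hed : e * d = 0 := hdz d e hd0 he0 (posPart_inf_negPart_eq_zero _)
        have hde : d - e = b - (n : A) := posPart_sub_negPart _
        have hb' : (d - e) + (n : A) = b := by rw [hde, sub_add_cancel]
        have hbd2 : b * d = d * d + (n : A) * d := by
          rw [← hb', add_mul, sub_mul, hed, sub_zero]
        have h1 : (n : A) * d ≤ b * b := by
          have hA : (n : A) * d ≤ b * d := by
            rw [hbd2]
            exact le_add_of_nonneg_left (hmul_pos d d hd0 hd0)
          have hB : b * d ≤ b * b := by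
            have hc' : c = b - d := by rw [← hcd, add_sub_cancel_right]
            have hpos := hmul_pos b c hb hc0
            rw [hc', mul_sub] at hpos
            exact sub_nonneg.mp hpos
          exact hA.trans hB
        have h2 : n • d ≤ b * b := by rw [nsmul_eq_mul]; exact h1
        have h4 : π ((n : A)) u = n • u := by
          rw [hncast, ← Nat.cast_smul_eq_nsmul ℝ, map_smul, LinearMap.smul_apply, hπ1,
            LinearMap.id_apply, Nat.cast_smul_eq_nsmul]
        have h3 : π c u ≤ n • u := by
          have := hπle c ((n : A)) inf_le_right u hu
          rwa [h4] at this
        have h5 : (π c u) ⊓ v = 0 := by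
          have hle2 : (π c u) ⊓ v ≤ (n • u) ⊓ v := inf_le_inf_right v h3
          rw [nsmul_inf_zero' hu hv huv n] at hle2
          exact le_antisymm hle2 (le_inf (hπpos c hc0 u hu) hv)
        have h6 : (π b u) ⊓ v ≤ π d u := by
          have hsplit : π b u = π c u + π d u := by
            rw [← hcd, map_add, LinearMap.add_apply]
          have h10 := riesz_inf' (π c u) (π d u) v (hπpos c hc0 u hu) (hπpos d hd0 u hu) hv
          rw [← hsplit, h5, zero_add] at h10
          exact h10.trans inf_le_left
        have h7 : n • (π d u) ≤ π (b * b) u := by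
          have h11 := hπle (n • d) (b * b) h2 u hu
          have h8 : π (n • d) u = n • π d u := by
            rw [← Nat.cast_smul_eq_nsmul ℝ n d, map_smul, LinearMap.smul_apply,
              Nat.cast_smul_eq_nsmul]
          rwa [h8] at h11
        calc n • ((π b u) ⊓ v) ≤ n • (π d u) := nsmul_le_nsmul_right h6 n
        _ ≤ π (b * b) u := h7
      obtain ⟨s, hs⟩ := hppp ((π b u) ⊓ v) (π (b * b) u) hwpos
      have habs : |(π b u) ⊓ v| = (π b u) ⊓ v := abs_of_nonneg hz0
      have hmem : ∀ n : ℕ, n • ((π b u) ⊓ v) ∈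
          {t | ∃ n : ℕ, t = (π (b * b) u) ⊓ (n • |(π b u) ⊓ v|)} := by
        intro n
        exact ⟨n, by rw [habs, inf_eq_right.mpr (hnz n)]⟩
      have hub2 : s ≤ s - ((π b u) ⊓ v) := by
        apply hs.2
        rintro t ⟨n, rfl⟩
        rw [habs]
        have h10 : (n + 1) • ((π b u) ⊓ v) ≤ s := hs.1 (hmem (n + 1))
        rw [succ_nsmul] at h10
        exact inf_le_right.trans (le_sub_iff_add_le.mpr h10)
      have hle3 : (π b u) ⊓ v ≤ 0 := by
        have h12 := le_sub_iff_add_le.mp hub2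
        exact (add_le_iff_nonpos_right s).mp h12
      exact le_antisymm hle3 hz0
    -- final
    intro x y hxy
    have habs2 : ∀ b : A, 0 ≤ b → ∀ p : E, |π b p| ≤ π b |p| := by
      intro b hb p
      rw [abs_le']
      constructor
      · exact hπmono b hb p |p| (le_abs_self p)
      · have := hπmono b hb (-p) |p| (neg_le_abs p)
        rwa [map_neg] at this
    have key : |π a x| ≤ π |a| |x| := by
      have hsub : π a x = π (a⁺) x - π (a⁻) x := by
        rw [← posPart_sub_negPart a, map_sub, LinearMap.sub_apply]
        simp [posPart_sub_negPart]
      calc |π a x| = |π (a⁺) x + -(π (a⁻) x)| := by rw [hsub, sub_eq_add_neg]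
      _ ≤ |π (a⁺) x| + |(-(π (a⁻) x))| := abs_add_le _ _
      _ = |π (a⁺) x| + |π (a⁻) x| := by rw [abs_neg]
      _ ≤ π (a⁺) |x| + π (a⁻) |x| :=
          add_le_add (habs2 _ (posPart_nonneg a) x) (habs2 _ (negPart_nonneg a) x)
      _ = π |a| |x| := by rw [← LinearMap.add_apply, ← map_add, posPart_add_negPart]
    have h0 : 0 ≤ |π a x| ⊓ |y| := le_inf (abs_nonneg _) (abs_nonneg _)
    have h3 := core |a| (abs_nonneg a) |x| |y| (abs_nonneg x) (abs_nonneg y) hxy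
    exact le_antisymm (le_trans (inf_le_inf_right _ key) h3.le) h0
  intro a
  exact ⟨hπob a, main a⟩
end

section
/- There exists a Dedekind complete Banach lattice E (namely E = ℓ_∞) and an order bounded linear operator T on E such that left multiplication λ_T : L_ob(E) → L_ob(E) is not order continuous. Specifically, taking f a positive extension to ℓ_∞ of the limit functional on c, and T x = f(x) e₁, there is an increasing sequence (S_n) in L_ob(E) with S_n ↑ S but T S_n = 0 for all n while T S ≠ 0. -/
open Filter

/-- `(𝕃, j)` is a realization of the vector lattice `L_ob(E)` of order bounded
linear operators on `E`: `j` is an injective linear map onto the order bounded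
operators, and the order of `𝕃` is the operator order. -/
structure IsLobLattice (E 𝕃 : Type*) [Lattice E] [AddCommGroup E]
    [CovariantClass E E (· + ·) (· ≤ ·)] [Module ℝ E]
    [Lattice 𝕃] [AddCommGroup 𝕃] [Module ℝ 𝕃]
    (j : 𝕃 →ₗ[ℝ] E →ₗ[ℝ] E) : Prop where
  inj : Function.Injective j
  mem_range_iff : ∀ f : E →ₗ[ℝ] E, (∃ S, j S = f) ↔ IsOrderBoundedMap f
  le_iff : ∀ S T : 𝕃, S ≤ T ↔ ∀ x : E, 0 ≤ x → j S x ≤ j T x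


/-- The standard unit vector `e_n` in `ℓ_∞`, realized as the bounded (continuous)
functions on the discrete space `ℕ`. -/
noncomputable def eVec (n : ℕ) : BoundedContinuousFunction ℕ ℝ :=
  ⟨⟨fun m => if m = n then (1 : ℝ) else 0, continuous_of_discreteTopology⟩, 2, by
    intro x y
    simp only [ContinuousMap.coe_mk]
    rw [Real.dist_eq]
    split_ifs <;> norm_num⟩

/-! ### Auxiliary constructions -/

namespace Stmt4Aux

open Filter

noncomputable def U : Ultrafilter ℕ := (Ultrafilter.exists_le (atTop : Filter ℕ)).choose

lemma U_le : (U : Filter ℕ) ≤ atTop := (Ultrafilter.exists_le (atTop : Filter ℕ)).choose_spec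

lemma exists_lim (x : BoundedContinuousFunction ℕ ℝ) :
    ∃ L : ℝ, Tendsto (⇑x) (U : Filter ℕ) (nhds L) := by
  have hc : IsCompact (Set.Icc (-‖x‖) ‖x‖) := isCompact_Icc
  have hle : (Ultrafilter.map (⇑x) U : Filter ℝ) ≤ 𝓟 (Set.Icc (-‖x‖) ‖x‖) := by
    rw [le_principal_iff]
    exact mem_map.mpr (univ_mem' fun n => abs_le.mp (x.norm_coe_le_norm n))
  obtain ⟨a, -, ha⟩ := hc.ultrafilter_le_nhds (Ultrafilter.map (⇑x) U) hle
  exact ⟨a, ha⟩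

noncomputable def flim (x : BoundedContinuousFunction ℕ ℝ) : ℝ := (exists_lim x).choose

lemma flim_spec (x : BoundedContinuousFunction ℕ ℝ) :
    Tendsto (⇑x) (U : Filter ℕ) (nhds (flim x)) := (exists_lim x).choose_spec

lemma flim_eq {x : BoundedContinuousFunction ℕ ℝ} {L : ℝ}
    (h : Tendsto (⇑x) (U : Filter ℕ) (nhds L)) : flim x = L :=
  tendsto_nhds_unique (flim_spec x) h

noncomputable def fbig : BoundedContinuousFunction ℕ ℝ →ₗ[ℝ] ℝ where
  toFun := flim
  map_add' x y := flim_eq (by rw [BoundedContinuousFunction.coe_add]; exact (flim_spec x).add (flim_spec y))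
  map_smul' c x := flim_eq (by simpa using (flim_spec x).const_mul c)

lemma fbig_pos (x : BoundedContinuousFunction ℕ ℝ) (hx : 0 ≤ x) : 0 ≤ fbig x :=
  le_of_tendsto_of_tendsto' tendsto_const_nhds (flim_spec x) (fun n => hx n)

lemma fbig_lim (x : BoundedContinuousFunction ℕ ℝ) (L : ℝ)
    (h : Tendsto (fun n => x n) atTop (nhds L)) : fbig x = L :=
  flim_eq (h.mono_left U_le)

lemma fbig_mono {x y : BoundedContinuousFunction ℕ ℝ} (h : x ≤ y) : fbig x ≤ fbig y := by
  have := fbig_pos (y - x) (by intro m; simpa using h m)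
  have hsub : fbig (y - x) = fbig y - fbig x := map_sub fbig y x
  linarith [hsub ▸ this]

/-- The indicator of `{0, …, n}`. -/
noncomputable def vVec (n : ℕ) : BoundedContinuousFunction ℕ ℝ :=
  ⟨⟨fun m => if m ≤ n then (1 : ℝ) else 0, continuous_of_discreteTopology⟩, 2, by
    intro x y
    simp only [ContinuousMap.coe_mk]
    rw [Real.dist_eq]
    split_ifs <;> norm_num⟩

lemma vVec_apply (n m : ℕ) : vVec n m = if m ≤ n then (1 : ℝ) else 0 := rfl

lemma vVec_nonneg (n m : ℕ) : 0 ≤ vVec n m := by rw [vVec_apply]; split_ifs <;> norm_num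

lemma vVec_le_one (n m : ℕ) : vVec n m ≤ 1 := by rw [vVec_apply]; split_ifs <;> norm_num

lemma vVec_self (n : ℕ) : vVec n n = 1 := by rw [vVec_apply]; simp

lemma vVec_mono {n k : ℕ} (h : n ≤ k) (m : ℕ) : vVec n m ≤ vVec k m := by
  rw [vVec_apply, vVec_apply]
  by_cases h1 : m ≤ n
  · rw [if_pos h1, if_pos (h1.trans h)]
  · rw [if_neg h1]; split_ifs <;> norm_num

lemma fbig_vVec (n : ℕ) : fbig (vVec n) = 0 := by
  apply fbig_lim
  apply Tendsto.congr' (f₁ := fun _ => (0 : ℝ))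
  · filter_upwards [eventually_gt_atTop n] with m hm
    rw [vVec_apply, if_neg (by omega)]
  · exact tendsto_const_nhds

lemma fbig_one : fbig (1 : BoundedContinuousFunction ℕ ℝ) = 1 :=
  fbig_lim _ 1 (by simpa using tendsto_const_nhds)

lemma one_apply' (m : ℕ) : (1 : BoundedContinuousFunction ℕ ℝ) m = 1 := rfl

/-- Constant nets order converge only to their value. -/
lemma const_orderTendsto {E : Type*} [Lattice E] [AddCommGroup E]
    [CovariantClass E E (· + ·) (· ≤ ·)] {ι : Type*} [Preorder ι] {c l : E}
    (h : OrderTendsto (fun _ : ι => c) l) : c = l := by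
  obtain ⟨D, hne, -, hglb, hbound⟩ := h
  have hlb : |c - l| ∈ lowerBounds D := by
    intro d hd
    obtain ⟨a0, ha0⟩ := hbound d hd
    exact ha0 a0 le_rfl
  have h0 : |c - l| ≤ 0 := hglb.2 hlb
  have h1 : (0 : E) ≤ c - l := neg_nonpos.mp ((neg_le_abs _).trans h0)
  have h2 : c - l ≤ 0 := (le_abs_self _).trans h0
  have : c - l = 0 := le_antisymm h2 h1
  exact sub_eq_zero.mp this

end Stmt4Aux

open Stmt4Aux



lemma stmt4_Tnoc (T : BoundedContinuousFunction ℕ ℝ →ₗ[ℝ] BoundedContinuousFunction ℕ ℝ)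
    (hT : ∀ x, T x = fbig x • eVec 0) : ¬ IsOrderContinuousMap T := by
  intro h
  have bcf_le_iff : ∀ {f g : BoundedContinuousFunction ℕ ℝ}, f ≤ g ↔ ∀ m, f m ≤ g m :=
    fun {f g} => Iff.rfl
  have hTv : ∀ n, T (vVec n) = 0 := fun n => by rw [hT, fbig_vVec, zero_smul]
  have hT1 : T 1 = eVec 0 := by rw [hT, fbig_one, one_smul]
  have hv1 : OrderTendsto (fun n : ULift ℕ => vVec n.down)
      (1 : BoundedContinuousFunction ℕ ℝ) := by
    refine ⟨Set.range (fun n => 1 - vVec n), ⟨_, ⟨0, rfl⟩⟩, ?_, ⟨?_, ?_⟩, ?_⟩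
    · rintro _ ⟨n, rfl⟩ _ ⟨m, rfl⟩
      refine ⟨1 - vVec (max n m), ⟨_, rfl⟩, ?_, ?_⟩
      · show 1 - vVec (max n m) ≤ 1 - vVec n
        rw [bcf_le_iff]; intro k
        simp only [BoundedContinuousFunction.sub_apply, one_apply']
        linarith [vVec_mono (le_max_left n m) k]
      · show 1 - vVec (max n m) ≤ 1 - vVec m
        rw [bcf_le_iff]; intro k
        simp only [BoundedContinuousFunction.sub_apply, one_apply']
        linarith [vVec_mono (le_max_right n m) k]
    · rintro _ ⟨n, rfl⟩
      rw [bcf_le_iff]; intro k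
      simp only [BoundedContinuousFunction.sub_apply, one_apply',
        BoundedContinuousFunction.coe_zero, Pi.zero_apply]
      linarith [vVec_le_one n k]
    · intro c hc
      rw [bcf_le_iff]; intro m
      have h1 := bcf_le_iff.mp (hc (Set.mem_range_self m)) m
      simp only [BoundedContinuousFunction.sub_apply, one_apply', vVec_self] at h1
      simpa using h1
    · rintro _ ⟨n, rfl⟩
      refine ⟨ULift.up n, fun a ha => ?_⟩
      have han : n ≤ a.down := ha
      rw [bcf_le_iff]; intro m
      show |(vVec a.down - 1) m| ≤ _
      rw [BoundedContinuousFunction.sub_apply, one_apply',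
        BoundedContinuousFunction.sub_apply, one_apply',
        abs_of_nonpos (by linarith [vVec_le_one a.down m]), neg_sub]
      linarith [vVec_mono han m]
  have h2 := h _ 1 hv1
  have h3 : OrderTendsto (fun _ : ULift ℕ => (0 : BoundedContinuousFunction ℕ ℝ)) (T 1) := by
    have he : (fun n : ULift ℕ => T (vVec n.down)) =
        fun _ : ULift ℕ => (0 : BoundedContinuousFunction ℕ ℝ) := funext fun n => hTv n.down
    rwa [he] at h2
  have h4 : (0 : BoundedContinuousFunction ℕ ℝ) = T 1 := const_orderTendsto h3
  have h5 := DFunLike.congr_fun h4 0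
  have he0 : eVec 0 0 = 1 := rfl
  rw [hT1, he0] at h5
  simpa using h5

/-- On the Dedekind complete Banach lattice `E = ℓ_∞` there is an
order bounded operator `T` whose left multiplication `λ_T` on `L_ob(E)` is not order
continuous.  Specifically: there is a positive linear functional `f` on `ℓ_∞`
extending the limit functional on `c`; for the operator `T x = f(x) • e₀` (which is
order bounded) there is an increasing sequence `(S_n)` in `L_ob(E)` with `S_n ↑ S`
while `T ∘ S_n = 0` for all `n` and `T ∘ S ≠ 0`; consequently, in any realization
`(𝕃, j)` of `L_ob(E)`, the lifted sequence order converges to the lift of `S`,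
whereas its image under `λ_T` does not order converge to the image of `S`. -/
theorem stmt4 :
    ∃ f : BoundedContinuousFunction ℕ ℝ →ₗ[ℝ] ℝ,
      (∀ x : BoundedContinuousFunction ℕ ℝ, 0 ≤ x → 0 ≤ f x) ∧
      (∀ (x : BoundedContinuousFunction ℕ ℝ) (L : ℝ),
        Filter.Tendsto (fun n => x n) Filter.atTop (nhds L) → f x = L) ∧
      ∀ T : BoundedContinuousFunction ℕ ℝ →ₗ[ℝ] BoundedContinuousFunction ℕ ℝ,
        (∀ x, T x = f x • eVec 0) →
        IsOrderBoundedMap T ∧ ¬ IsOrderContinuousMap T ∧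
        ∃ S : ℕ → (BoundedContinuousFunction ℕ ℝ →ₗ[ℝ] BoundedContinuousFunction ℕ ℝ),
          ∃ Slim : BoundedContinuousFunction ℕ ℝ →ₗ[ℝ] BoundedContinuousFunction ℕ ℝ,
          (∀ n, IsOrderBoundedMap (S n)) ∧ IsOrderBoundedMap Slim ∧
          -- `S_n ↑ Slim` in `L_ob(E)` (pointwise on positive vectors):
          (∀ x, 0 ≤ x → Monotone fun n => S n x) ∧
          (∀ x, 0 ≤ x → IsLUB (Set.range fun n => S n x) (Slim x)) ∧
          (∀ n, T ∘ₗ S n = 0) ∧ T ∘ₗ Slim ≠ 0 ∧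
          -- hence `λ_T` is not order continuous on `L_ob(E)`:
          ∀ (𝕃 : Type) [Lattice 𝕃] [AddCommGroup 𝕃]
            [CovariantClass 𝕃 𝕃 (· + ·) (· ≤ ·)] [Module ℝ 𝕃]
            (j : 𝕃 →ₗ[ℝ] BoundedContinuousFunction ℕ ℝ →ₗ[ℝ]
              BoundedContinuousFunction ℕ ℝ),
            IsLobLattice (BoundedContinuousFunction ℕ ℝ) 𝕃 j →
            ∀ (Sl : ℕ → 𝕃) (Sliml : 𝕃) (Cl : ℕ → 𝕃) (Climl : 𝕃),
              (∀ n, j (Sl n) = S n) → j Sliml = Slim →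
              (∀ n, j (Cl n) = T ∘ₗ S n) → j Climl = T ∘ₗ Slim →
              OrderTendsto Sl Sliml ∧ ¬ OrderTendsto Cl Climl := by
  classical
  refine ⟨fbig, fbig_pos, fbig_lim, ?_⟩
  intro T hT
  have bcf_le_iff : ∀ {f g : BoundedContinuousFunction ℕ ℝ}, f ≤ g ↔ ∀ m, f m ≤ g m :=
    fun {f g} => Iff.rfl
  have e0_nonneg : ∀ m, (0 : ℝ) ≤ eVec 0 m := by
    intro m; show (0:ℝ) ≤ if m = 0 then 1 else 0; split_ifs <;> norm_num
  have e0_zero : eVec 0 0 = 1 := rfl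
  -- the operators S n and Slim
  have keylin : ∀ w : BoundedContinuousFunction ℕ ℝ, ∃ L :
      BoundedContinuousFunction ℕ ℝ →ₗ[ℝ] BoundedContinuousFunction ℕ ℝ,
      ∀ x, L x = x 0 • w := fun w =>
    ⟨{ toFun := fun x => x 0 • w
       map_add' := fun x y => by
         show ((x + y) 0) • w = x 0 • w + y 0 • w
         rw [BoundedContinuousFunction.add_apply, add_smul]
       map_smul' := fun c x => by
         show ((c • x) 0) • w = c • (x 0 • w)
         rw [BoundedContinuousFunction.smul_apply, smul_eq_mul, mul_smul] }, fun x => rfl⟩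
  obtain ⟨S, hS⟩ := Classical.axiomOfChoice (fun n => keylin (vVec n))
  obtain ⟨Slim, hSlim⟩ := keylin 1
  -- order boundedness of maps x ↦ x 0 • w with 0 ≤ w ≤ 1
  have hOB : ∀ (L : BoundedContinuousFunction ℕ ℝ →ₗ[ℝ] BoundedContinuousFunction ℕ ℝ)
      (w : BoundedContinuousFunction ℕ ℝ), (∀ x, L x = x 0 • w) →
      (∀ m, 0 ≤ w m) → (∀ m, w m ≤ 1) → IsOrderBoundedMap L := by
    intro L w hL hw0 hw1 x hx
    refine ⟨x 0 • (1 : BoundedContinuousFunction ℕ ℝ), fun y hy => ?_⟩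
    rw [bcf_le_iff]
    intro m
    have h1 : -(x 0) ≤ y 0 := by simpa using bcf_le_iff.mp hy.1 0
    have h2 : y 0 ≤ x 0 := bcf_le_iff.mp hy.2 0
    have hyx : |y 0| ≤ x 0 := abs_le.mpr ⟨by linarith, h2⟩
    have hx0 : (0:ℝ) ≤ x 0 := le_trans (abs_nonneg _) hyx
    show |L y m| ≤ (x 0 • (1 : BoundedContinuousFunction ℕ ℝ)) m
    rw [hL, BoundedContinuousFunction.smul_apply, BoundedContinuousFunction.smul_apply,
      smul_eq_mul, smul_eq_mul, one_apply', mul_one, abs_mul]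
    calc |y 0| * |w m| ≤ x 0 * 1 := by
          apply mul_le_mul hyx _ (abs_nonneg _) hx0
          rw [abs_of_nonneg (hw0 m)]; exact hw1 m
      _ = x 0 := mul_one _
  have hSOB : ∀ n, IsOrderBoundedMap (S n) :=
    fun n => hOB (S n) (vVec n) (hS n) (vVec_nonneg n) (vVec_le_one n)
  have hSlimOB : IsOrderBoundedMap Slim :=
    hOB Slim 1 hSlim (fun m => by rw [one_apply']; norm_num) (fun m => le_of_eq (one_apply' m))
  -- order boundedness of T
  have hTOB : IsOrderBoundedMap T := by
    intro x hx
    refine ⟨fbig x • eVec 0, fun y hy => ?_⟩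
    have hny : -y ≤ x := neg_le.mp hy.1
    have h1 : -(fbig y) ≤ fbig x := by
      have := fbig_mono hny; rwa [map_neg] at this
    have h2 : fbig y ≤ fbig x := fbig_mono hy.2
    have hyx : |fbig y| ≤ fbig x := abs_le.mpr ⟨by linarith, h2⟩
    rw [bcf_le_iff]
    intro m
    show |T y m| ≤ (fbig x • eVec 0) m
    rw [hT, BoundedContinuousFunction.smul_apply, BoundedContinuousFunction.smul_apply,
      smul_eq_mul, smul_eq_mul, abs_mul, abs_of_nonneg (e0_nonneg m)]
    exact mul_le_mul_of_nonneg_right hyx (e0_nonneg m)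
  -- T applied to the key vectors
  have hTv : ∀ n, T (vVec n) = 0 := fun n => by rw [hT, fbig_vVec, zero_smul]
  have hT1 : T 1 = eVec 0 := by rw [hT, fbig_one, one_smul]
  -- T is not order continuous
  have hTnoc := stmt4_Tnoc T hT
  -- the composition identities
  have hTSn : ∀ n, T ∘ₗ S n = 0 := by
    intro n
    apply LinearMap.ext
    intro x
    rw [LinearMap.comp_apply, hS n, map_smul, hTv n, smul_zero, LinearMap.zero_apply]
  have hTSlim : T ∘ₗ Slim ≠ 0 := by
    intro h
    have h1 := DFunLike.congr_fun h (1 : BoundedContinuousFunction ℕ ℝ)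
    rw [LinearMap.comp_apply, hSlim, one_apply', one_smul, hT1, LinearMap.zero_apply] at h1
    have := DFunLike.congr_fun h1 0
    rw [e0_zero] at this
    simpa using this
  -- pointwise monotonicity facts
  have hSx : ∀ (x : BoundedContinuousFunction ℕ ℝ), 0 ≤ x →
      ∀ {n m : ℕ}, n ≤ m → S n x ≤ S m x := by
    intro x hx n m hnm
    rw [hS n, hS m, bcf_le_iff]
    intro k
    rw [BoundedContinuousFunction.smul_apply, BoundedContinuousFunction.smul_apply,
      smul_eq_mul, smul_eq_mul]
    have hx0 : (0:ℝ) ≤ x 0 := by simpa using bcf_le_iff.mp hx 0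
    exact mul_le_mul_of_nonneg_left (vVec_mono hnm k) hx0
  have hSlimx : ∀ (x : BoundedContinuousFunction ℕ ℝ), 0 ≤ x → ∀ n, S n x ≤ Slim x := by
    intro x hx n
    rw [hS n, hSlim, bcf_le_iff]
    intro k
    rw [BoundedContinuousFunction.smul_apply, BoundedContinuousFunction.smul_apply,
      smul_eq_mul, smul_eq_mul, one_apply']
    have hx0 : (0:ℝ) ≤ x 0 := by simpa using bcf_le_iff.mp hx 0
    exact mul_le_mul_of_nonneg_left (vVec_le_one n k) hx0
  refine ⟨hTOB, hTnoc, S, Slim, hSOB, hSlimOB, fun x hx n m hnm => hSx x hx hnm, ?_, hTSn,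
    hTSlim, ?_⟩
  · -- IsLUB
    intro x hx
    constructor
    · rintro _ ⟨n, rfl⟩
      exact hSlimx x hx n
    · intro u hu
      rw [hSlim, bcf_le_iff]
      intro m
      have h1 := bcf_le_iff.mp (hu (Set.mem_range_self m)) m
      rw [hS m, BoundedContinuousFunction.smul_apply, smul_eq_mul, vVec_self, mul_one] at h1
      rw [BoundedContinuousFunction.smul_apply, smul_eq_mul, one_apply', mul_one]
      exact h1
  · -- the lattice 𝕃 part
    intro 𝕃 _ _ _ _ j hj Sl Sliml Cl Climl hSl hSliml hCl hCliml
    have hSlmono : Monotone Sl := by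
      intro n m hnm
      rw [hj.le_iff]
      intro x hx
      rw [hSl n, hSl m]
      exact hSx x hx hnm
    have hSlle : ∀ n, Sl n ≤ Sliml := by
      intro n
      rw [hj.le_iff]
      intro x hx
      rw [hSl n, hSliml]
      exact hSlimx x hx n
    constructor
    · -- OrderTendsto Sl Sliml
      refine ⟨Set.range (fun n => Sliml - Sl n), ⟨_, ⟨0, rfl⟩⟩, ?_, ⟨?_, ?_⟩, ?_⟩
      · rintro _ ⟨n, rfl⟩ _ ⟨m, rfl⟩
        exact ⟨Sliml - Sl (max n m), ⟨_, rfl⟩,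
          sub_le_sub_left (hSlmono (le_max_left n m)) _,
          sub_le_sub_left (hSlmono (le_max_right n m)) _⟩
      · rintro _ ⟨n, rfl⟩
        exact sub_nonneg.mpr (hSlle n)
      · intro c hc
        rw [hj.le_iff]
        intro x hx
        rw [map_zero, LinearMap.zero_apply, bcf_le_iff]
        intro m
        have h1 : c ≤ Sliml - Sl m := hc (Set.mem_range_self m)
        have h2 := (hj.le_iff _ _).mp h1 x hx
        have h3 : j (Sliml - Sl m) x = Slim x - S m x := by
          rw [map_sub, LinearMap.sub_apply, hSliml, hSl m]
        rw [h3] at h2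
        have h4 := bcf_le_iff.mp h2 m
        rw [BoundedContinuousFunction.sub_apply, hSlim, hS m,
          BoundedContinuousFunction.smul_apply, BoundedContinuousFunction.smul_apply,
          smul_eq_mul, smul_eq_mul, one_apply', vVec_self, mul_one, sub_self] at h4
        exact h4
      · rintro _ ⟨n, rfl⟩
        refine ⟨n, fun a ha => ?_⟩
        have h1 : Sl a - Sliml ≤ 0 := sub_nonpos.mpr (hSlle a)
        rw [abs_of_nonpos h1, neg_sub]
        exact sub_le_sub_left (hSlmono ha) _
    · -- ¬ OrderTendsto Cl Climl
      have hCl0 : ∀ n, Cl n = 0 := fun n => hj.inj (by rw [hCl n, hTSn n, map_zero])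
      have hClim : Climl ≠ 0 := by
        intro h
        apply hTSlim
        rw [← hCliml, h, map_zero]
      intro h
      have heq : Cl = fun _ : ℕ => (0 : 𝕃) := funext fun n => hCl0 n
      rw [heq] at h
      exact hClim (const_orderTendsto h).symm
end

section
/- Let E = L_p[0,1] with 1 ≤ p < ∞. Define for n ≥ 1 the positive operator S_n on E by (S_n f)(t) = f(t + 1/n) for t ∈ [0, (n−1)/n) and (S_n f)(t) = f(t − (n−1)/n) for t ∈ [(n−1)/n, 1]. Then (S_n) is a disjoint sequence in L_ob(E): S_m ∧ S_n = 0 whenever m ≠ n. -/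
open Filter

open MeasureTheory ENNReal

private lemma shift_congr {f g : ℝ → ℝ} {c a d : ℝ} (ha : 0 ≤ a) (hca : c + a ≤ 1)
    (hd0 : 0 ≤ d) (hdc : d ≤ c)
    (h : f =ᵐ[volume.restrict (Set.Icc (0:ℝ) 1)] g) :
    (fun t => if t < c then f (t + a) else f (t - d))
      =ᵐ[volume.restrict (Set.Icc (0:ℝ) 1)]
    (fun t => if t < c then g (t + a) else g (t - d)) := by
  have hD : volume ({t | f t ≠ g t} ∩ Set.Icc (0:ℝ) 1) = 0 := by
    have h' := ae_iff.mp h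
    rwa [Measure.restrict_apply' measurableSet_Icc] at h'
  rw [EventuallyEq, ae_iff, Measure.restrict_apply' measurableSet_Icc]
  set D := {t | f t ≠ g t} ∩ Set.Icc (0:ℝ) 1 with hDdef
  refine measure_mono_null (t := ((fun t => t + a) ⁻¹' D) ∪ ((fun t => t + (-d)) ⁻¹' D)) ?_ ?_
  · rintro t ⟨hne, ht0, ht1⟩
    simp only [Set.mem_setOf_eq] at hne
    by_cases htc : t < c
    · rw [if_pos htc, if_pos htc] at hne
      exact Or.inl ⟨hne, show (0:ℝ) ≤ t + a by linarith, show t + a ≤ 1 by linarith⟩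
    · rw [if_neg htc, if_neg htc] at hne
      push_neg at htc
      refine Or.inr ⟨?_, show (0:ℝ) ≤ t + -d by linarith, show t + -d ≤ 1 by linarith⟩
      show f (t + -d) ≠ g (t + -d)
      rwa [← sub_eq_add_neg]
  · refine measure_union_null ?_ ?_ <;> rw [measure_preimage_add_right] <;> exact hD

/-- Let `E = L_p[0,1]`, `1 ≤ p < ∞`, and for `n ≥ 1` let `S_n` be the
positive operator with `(S_n f)(t) = f(t + 1/n)` for `t ∈ [0, (n-1)/n)` and
`(S_n f)(t) = f(t - (n-1)/n)` otherwise.  Then `(S_n)` is a disjoint sequence in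
`L_ob(E)`: `S_m ∧ S_n = 0` for `m ≠ n`, where the infimum of two positive operators
is expressed via the Riesz–Kantorovich formula. -/
theorem stmt7 (p : ℝ≥0∞) [Fact (1 ≤ p)] (hp : p ≠ ∞)
    (S : ℕ → (Lp ℝ p (volume.restrict (Set.Icc (0:ℝ) 1)) →ₗ[ℝ]
      Lp ℝ p (volume.restrict (Set.Icc (0:ℝ) 1))))
    (hSdesc : ∀ n : ℕ, 1 ≤ n → ∀ f : Lp ℝ p (volume.restrict (Set.Icc (0:ℝ) 1)),
      ⇑(S n f) =ᵐ[volume.restrict (Set.Icc (0:ℝ) 1)]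
        fun t : ℝ => if t < ((n : ℝ) - 1) / n then f (t + 1 / n)
          else f (t - ((n : ℝ) - 1) / n))
    (hSpos : ∀ n : ℕ, ∀ f, 0 ≤ f → 0 ≤ S n f) :
    ∀ m n : ℕ, 1 ≤ m → 1 ≤ n → m ≠ n →
      ∀ x : Lp ℝ p (volume.restrict (Set.Icc (0:ℝ) 1)), 0 ≤ x →
        IsGLB {v | ∃ y z : Lp ℝ p (volume.restrict (Set.Icc (0:ℝ) 1)),
          0 ≤ y ∧ 0 ≤ z ∧ y + z = x ∧ v = S m y + S n z} 0 := by
  intro m n hm hn hmn x hx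
  constructor
  · rintro v ⟨y, z, hy, hz, hyz, rfl⟩
    exact add_nonneg (hSpos m y hy) (hSpos n z hz)
  intro b hb
  -- numeric setup
  have hm0 : (0:ℝ) < m := by exact_mod_cast hm
  have hn0 : (0:ℝ) < n := by exact_mod_cast hn
  have hm1 : (1:ℝ) ≤ m := by exact_mod_cast hm
  have hn1 : (1:ℝ) ≤ n := by exact_mod_cast hn
  set d0 : ℝ := 1/m - 1/n with hd0def
  have hd0ne : d0 ≠ 0 := by
    intro h
    apply hmn
    have : (1:ℝ)/m = 1/n := by rw [hd0def] at h; linarith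
    have : (m:ℝ) = n := by
      field_simp at this; exact_mod_cast this.symm
    exact_mod_cast this
  have him : 1/(m:ℝ) ≤ 1 := by rw [div_le_one hm0]; exact hm1
  have hin : 1/(n:ℝ) ≤ 1 := by rw [div_le_one hn0]; exact hn1
  have him0 : 0 < 1/(m:ℝ) := by positivity
  have hin0 : 0 < 1/(n:ℝ) := by positivity
  have hd0lt : |d0| < 1 := by
    rw [abs_lt]; constructor <;> rw [hd0def] <;> linarith
  set ε := min |d0| (1 - |d0|) with hεdef
  have hε : 0 < ε := lt_min (abs_pos.mpr hd0ne) (by linarith)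
  obtain ⟨M0, hM0⟩ := exists_nat_one_div_lt hε
  set M : ℕ := M0 + 1 with hMdef
  have hM0' : (0:ℝ) < M := by positivity
  have hMε : 1 / (M:ℝ) < ε := by
    have : ((M:ℝ)) = (M0:ℝ) + 1 := by push_cast [hMdef]; ring
    rw [this]; exact hM0
  -- branch identities
  have hcm : ((m:ℝ) - 1)/m = 1 - 1/m := by field_simp
  have hcn : ((n:ℝ) - 1)/n = 1 - 1/n := by field_simp
  have hcm0 : 0 ≤ ((m:ℝ) - 1)/m := by rw [hcm]; linarith
  have hcn0 : 0 ≤ ((n:ℝ) - 1)/n := by rw [hcn]; linarith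
  have hcm1 : ((m:ℝ) - 1)/m + 1/m ≤ 1 := by rw [hcm]; linarith
  have hcn1 : ((n:ℝ) - 1)/n + 1/n ≤ 1 := by rw [hcn]; linarith
  -- sets and Lp elements
  set s : ℕ → Set ℝ := fun k => Set.Ico ((k:ℝ)/M) (((k:ℝ)+1)/M) with hsdef
  set g : ℕ → ℝ → ℝ := fun k => (s k).indicator x with hgdef
  have hgmem : ∀ k, MemLp (g k) p (volume.restrict (Set.Icc (0:ℝ) 1)) :=
    fun k => (Lp.memLp x).indicator measurableSet_Ico
  set Y : ℕ → Lp ℝ p (volume.restrict (Set.Icc (0:ℝ) 1)) := fun k => (hgmem k).toLp (g k)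
    with hYdef
  set Z : ℕ → Lp ℝ p (volume.restrict (Set.Icc (0:ℝ) 1)) := fun k => x - Y k with hZdef
  have hxae : 0 ≤ᵐ[volume.restrict (Set.Icc (0:ℝ) 1)] ⇑x := (Lp.coeFn_nonneg x).mpr hx
  have hYnn : ∀ k, 0 ≤ Y k := by
    intro k
    refine (Lp.coeFn_nonneg _).mp ?_
    filter_upwards [(hgmem k).coeFn_toLp, hxae] with t h1 h2
    simp only [Pi.zero_apply] at h2
    rw [h1]
    exact Set.indicator_apply_nonneg fun _ => h2
  have hZnn : ∀ k, 0 ≤ Z k := by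
    intro k
    refine (Lp.coeFn_nonneg _).mp ?_
    filter_upwards [Lp.coeFn_sub x (Y k), (hgmem k).coeFn_toLp, hxae] with t h1 h2 h3
    simp only [Pi.zero_apply] at h3
    show 0 ≤ Z k t
    rw [hZdef]
    simp only []
    rw [h1]
    simp only [Pi.sub_apply]
    rw [h2]
    simp only [hgdef]
    by_cases ht : t ∈ s k
    · rw [Set.indicator_of_mem ht]; linarith
    · rw [Set.indicator_of_notMem ht]; linarith
  have hbk : ∀ k, b ≤ S m (Y k) + S n (Z k) := fun k =>
    hb ⟨Y k, Z k, hYnn k, hZnn k, show Y k + (x - Y k) = x by abel, rfl⟩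
  -- key a.e. inequality for each k
  have key : ∀ k : ℕ, ∀ᵐ t ∂(volume.restrict (Set.Icc (0:ℝ) 1)),
      b t ≤ (if t < ((m:ℝ) - 1)/m then g k (t + 1/m) else g k (t - ((m:ℝ) - 1)/m))
            + (if t < ((n:ℝ) - 1)/n then (x (t + 1/n) - g k (t + 1/n))
               else (x (t - ((n:ℝ) - 1)/n) - g k (t - ((n:ℝ) - 1)/n))) := by
    intro k
    have h1 : ⇑b ≤ᵐ[volume.restrict (Set.Icc (0:ℝ) 1)] ⇑(S m (Y k) + S n (Z k)) :=
      (Lp.coeFn_le _ _).mpr (hbk k)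
    have h2 := Lp.coeFn_add (S m (Y k)) (S n (Z k))
    have h3 := hSdesc m hm (Y k)
    have h4 := hSdesc n hn (Z k)
    have hY : ⇑(Y k) =ᵐ[volume.restrict (Set.Icc (0:ℝ) 1)] g k := (hgmem k).coeFn_toLp
    have h5 : (fun t => if t < ((m:ℝ) - 1)/m then (Y k) (t + 1/m) else (Y k) (t - ((m:ℝ) - 1)/m))
        =ᵐ[volume.restrict (Set.Icc (0:ℝ) 1)]
        (fun t => if t < ((m:ℝ) - 1)/m then g k (t + 1/m) else g k (t - ((m:ℝ) - 1)/m)) :=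
      shift_congr him0.le hcm1 hcm0 le_rfl hY
    have h6 : ⇑(Z k) =ᵐ[volume.restrict (Set.Icc (0:ℝ) 1)] fun t => x t - g k t := by
      filter_upwards [Lp.coeFn_sub x (Y k), hY] with t ha hbb
      show (x - Y k) t = x t - g k t
      rw [ha, Pi.sub_apply, hbb]
    have h7 : (fun t => if t < ((n:ℝ) - 1)/n then (Z k) (t + 1/n) else (Z k) (t - ((n:ℝ) - 1)/n))
        =ᵐ[volume.restrict (Set.Icc (0:ℝ) 1)]
        (fun t => if t < ((n:ℝ) - 1)/n then (x (t + 1/n) - g k (t + 1/n))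
          else (x (t - ((n:ℝ) - 1)/n) - g k (t - ((n:ℝ) - 1)/n))) := by
      have h := shift_congr hin0.le hcn1 hcn0 le_rfl h6
      filter_upwards [h] with t ht
      simpa using ht
    filter_upwards [h1, h2, h3, h4, h5, h7] with t e1 e2 e3 e4 e5 e7
    rw [e2, Pi.add_apply, e3, e4, e5, e7] at e1
    exact e1
  have key' := ae_all_iff.mpr key
  have hmem : ∀ᵐ t ∂(volume.restrict (Set.Icc (0:ℝ) 1)), t ∈ Set.Icc (0:ℝ) 1 :=
    ae_restrict_mem measurableSet_Icc
  have hne1 : ∀ᵐ t ∂(volume.restrict (Set.Icc (0:ℝ) 1)), t ≠ 1 := by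
    rw [ae_iff]
    have he : {t : ℝ | ¬ t ≠ 1} = {1} := by ext t; simp
    rw [he, Measure.restrict_apply' measurableSet_Icc]
    exact measure_mono_null Set.inter_subset_left Real.volume_singleton
  refine (Lp.coeFn_le b 0).mp ?_
  filter_upwards [key', hmem, hne1, Lp.coeFn_zero ℝ p (volume.restrict (Set.Icc (0:ℝ) 1))]
    with t hkey hmemt hnet hzero
  obtain ⟨ht0, ht1⟩ := hmemt
  have ht1' : t < 1 := lt_of_le_of_ne ht1 hnet
  set v : ℝ := if t < ((n:ℝ) - 1)/n then t + 1/n else t - ((n:ℝ) - 1)/n with hvdef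
  have hv0 : 0 ≤ v := by
    rw [hvdef]; split_ifs with h
    · linarith
    · push_neg at h; linarith
  have hv1 : v < 1 := by
    rw [hvdef]; split_ifs with h
    · rw [hcn] at h; linarith
    · rw [hcn]; linarith
  set k : ℕ := Nat.floor ((M:ℝ) * v) with hkdef
  have hvk : v ∈ s k := by
    show (k:ℝ)/M ≤ v ∧ v < ((k:ℝ) + 1)/M
    constructor
    · rw [div_le_iff₀ hM0']
      have h1 : ((Nat.floor ((M:ℝ) * v) : ℕ) : ℝ) ≤ (M:ℝ) * v :=
        Nat.floor_le (mul_nonneg hM0'.le hv0)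
      calc ((k:ℝ)) ≤ (M:ℝ) * v := h1
        _ = v * M := mul_comm _ _
    · rw [lt_div_iff₀ hM0']
      have h2 := Nat.lt_floor_add_one ((M:ℝ) * v)
      calc v * (M:ℝ) = (M:ℝ) * v := mul_comm _ _
        _ < (k:ℝ) + 1 := h2
  have hkey' := hkey k
  set u : ℝ := if t < ((m:ℝ) - 1)/m then t + 1/m else t - ((m:ℝ) - 1)/m with hudef
  have hdiff : u - v = d0 ∨ u - v = d0 + 1 ∨ u - v = d0 - 1 := by
    rw [hudef, hvdef, hd0def]
    split_ifs with h1 h2 h2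
    · left; ring
    · right; left; rw [hcn]; ring
    · right; right; rw [hcm]; ring
    · left; rw [hcm, hcn]; ring
  have habs : ε ≤ |u - v| := by
    obtain ⟨hl, hr⟩ := abs_lt.mp hd0lt
    have ha1 : -|d0| ≤ d0 := neg_abs_le d0
    have ha2 : d0 ≤ |d0| := le_abs_self d0
    have hmin1 : ε ≤ |d0| := min_le_left _ _
    have hmin2 : ε ≤ 1 - |d0| := min_le_right _ _
    rcases hdiff with h|h|h <;> rw [h]
    · exact hmin1
    · rw [abs_of_pos (by linarith)]; linarith
    · rw [abs_of_neg (by linarith)]; linarith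
  have hus : u ∉ s k := by
    intro hu
    have hu1 : (k:ℝ)/M ≤ u := hu.1
    have hu2 : u < ((k:ℝ) + 1)/M := hu.2
    have hv1' : (k:ℝ)/M ≤ v := hvk.1
    have hv2' : v < ((k:ℝ) + 1)/M := hvk.2
    have hdm : ((k:ℝ) + 1)/M - (k:ℝ)/M = 1/M := by ring
    have : |u - v| < 1/M := by
      rw [abs_sub_lt_iff]; constructor <;> linarith
    linarith
  have hA : (if t < ((m:ℝ) - 1)/m then g k (t + 1/m) else g k (t - ((m:ℝ) - 1)/m)) = g k u := by
    rw [hudef]; split_ifs <;> rfl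
  have hB : (if t < ((n:ℝ) - 1)/n then (x (t + 1/n) - g k (t + 1/n))
      else (x (t - ((n:ℝ) - 1)/n) - g k (t - ((n:ℝ) - 1)/n))) = x v - g k v := by
    rw [hvdef]; split_ifs <;> rfl
  rw [hA, hB] at hkey'
  have hA0 : g k u = 0 := by simp only [hgdef]; exact Set.indicator_of_notMem hus _
  have hB0 : g k v = x v := by simp only [hgdef]; exact Set.indicator_of_mem hvk _
  rw [hzero, Pi.zero_apply]
  linarith [hkey']
end

section
/- Let E be a Banach lattice and A a subset of E. Then the sequential strong order adherence of A equals the sequential strong order adherence of the norm closure of A: every element that is an order limit in E of a sequence from the norm closure of A is already an order limit of a sequence from A. -/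
open Filter

section Adh
universe u
variable {E : Type*} [Lattice E] [AddCommGroup E]
  [CovariantClass E E (· + ·) (· ≤ ·)]

/-- The order adherence of a set: all order limits of nets from the set. -/
def orderAdherence (A : Set E) : Set E :=
  {l | ∃ (ι : Type u) (_ : Preorder ι) (_ : Nonempty ι),
      (∀ a b : ι, ∃ c : ι, a ≤ c ∧ b ≤ c) ∧
      ∃ x : ι → E, (∀ a, x a ∈ A) ∧ OrderTendsto x l}

/-- The unbounded order adherence of a set. -/
def uoAdherence (A : Set E) : Set E :=
  {l | ∃ (ι : Type u) (_ : Preorder ι) (_ : Nonempty ι),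
      (∀ a b : ι, ∃ c : ι, a ≤ c ∧ b ≤ c) ∧
      ∃ x : ι → E, (∀ a, x a ∈ A) ∧ UOTendsto x l}

/-- The sequential order adherence of a set. -/
def seqOrderAdherence (A : Set E) : Set E :=
  {l | ∃ x : ℕ → E, (∀ n, x n ∈ A) ∧ OrderTendsto x l}

/-- The sequential unbounded order adherence of a set. -/
def seqUOAdherence (A : Set E) : Set E :=
  {l | ∃ x : ℕ → E, (∀ n, x n ∈ A) ∧ UOTendsto x l}

end Adh

set_option maxHeartbeats 1000000 in
/-- Let `E` be a Banach lattice and `A ⊆ E`.  Then the sequential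
order adherence of `A` equals the sequential order adherence of the norm closure of
`A`. -/
theorem stmt18 {E : Type*} [NormedAddCommGroup E] [Lattice E] [HasSolidNorm E]
    [IsOrderedAddMonoid E] [CompleteSpace E]
    (A : Set E) :
    seqOrderAdherence A = seqOrderAdherence (closure A) := by
  apply Set.Subset.antisymm
  · rintro l ⟨x, hxA, hx⟩
    exact ⟨x, fun n => subset_closure (hxA n), hx⟩
  · rintro l ⟨x, hxA, D, hDne, hDdir, hDglb, hD⟩
    have hy : ∀ n : ℕ, ∃ y ∈ A, ‖y - x n‖ < (2 : ℝ)⁻¹ ^ n := by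
      intro n
      obtain ⟨b, hbA, hb⟩ := Metric.mem_closure_iff.mp (hxA n) ((2 : ℝ)⁻¹ ^ n)
        (by positivity)
      refine ⟨b, hbA, ?_⟩
      rwa [← dist_eq_norm, dist_comm]
    choose y hyA hyn using hy
    set f : ℕ → E := fun n => |y n - x n| with hf
    have hfnorm : ∀ n, ‖f n‖ ≤ (2 : ℝ)⁻¹ ^ n := by
      intro n
      rw [hf]
      simpa [norm_abs_eq_norm] using (hyn n).le
    have hgeo : Summable (fun n : ℕ => (2 : ℝ)⁻¹ ^ n) :=
      summable_geometric_of_lt_one (by norm_num) (by norm_num)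
    have hfs : Summable f := Summable.of_norm_bounded hgeo hfnorm
    have hfs' : ∀ n : ℕ, Summable (fun m => f (m + n)) :=
      fun n => (summable_nat_add_iff n).mpr hfs
    set z : ℕ → E := fun n => ∑' m, f (m + n) with hz
    have hz0 : ∀ n, 0 ≤ z n := fun n => tsum_nonneg (fun m => abs_nonneg _)
    have hzrec : ∀ n, z n = f n + z (n + 1) := by
      intro n
      have h1 := Summable.tsum_eq_zero_add (hfs' n)
      simp only [zero_add] at h1
      have h2 : ∀ m : ℕ, f (m + 1 + n) = f (m + (n + 1)) := fun m => by
        rw [show m + 1 + n = m + (n + 1) from by omega]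
      simp only [hz]
      rw [h1, tsum_congr h2]
    have hzanti : Antitone z := by
      apply antitone_nat_of_succ_le
      intro n
      rw [hzrec n]
      exact le_add_of_nonneg_left (abs_nonneg _)
    have hfz : ∀ n, f n ≤ z n := by
      intro n
      rw [hzrec n]
      exact le_add_of_nonneg_right (hz0 _)
    have hgeo' : ∀ n : ℕ, Summable (fun m : ℕ => (2 : ℝ)⁻¹ ^ (m + n)) :=
      fun n => (summable_nat_add_iff n).mpr hgeo
    have hns : ∀ n : ℕ, Summable (fun m => ‖f (m + n)‖) := fun n =>
      Summable.of_nonneg_of_le (fun m => norm_nonneg _) (fun m => hfnorm _) (hgeo' n)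
    have hznorm : ∀ n, ‖z n‖ ≤ 2 * (2 : ℝ)⁻¹ ^ n := by
      intro n
      calc ‖z n‖ ≤ ∑' m, ‖f (m + n)‖ := norm_tsum_le_tsum_norm (hns n)
        _ ≤ ∑' m : ℕ, (2 : ℝ)⁻¹ ^ (m + n) :=
            Summable.tsum_le_tsum (fun m => hfnorm _) (hns n) (hgeo' n)
        _ = (∑' m : ℕ, (2 : ℝ)⁻¹ ^ m) * (2 : ℝ)⁻¹ ^ n := by
            rw [show (fun m : ℕ => (2 : ℝ)⁻¹ ^ (m + n))
                = fun m : ℕ => (2 : ℝ)⁻¹ ^ m * (2 : ℝ)⁻¹ ^ n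
                from funext fun m => pow_add _ _ _, tsum_mul_right]
        _ = 2 * (2 : ℝ)⁻¹ ^ n := by
            rw [tsum_geometric_of_lt_one (by norm_num) (by norm_num)]
            norm_num
    have hztend : Tendsto z atTop (nhds 0) := by
      apply squeeze_zero_norm hznorm
      have : Tendsto (fun n : ℕ => (2 : ℝ)⁻¹ ^ n) atTop (nhds 0) :=
        tendsto_pow_atTop_nhds_zero_of_lt_one (by norm_num) (by norm_num)
      simpa using this.const_mul 2
    have hzglb : IsGLB (Set.range z) 0 := by
      constructor
      · rintro _ ⟨n, rfl⟩; exact hz0 n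
      · intro b hb
        refine ge_of_tendsto hztend ?_
        filter_upwards with n using hb ⟨n, rfl⟩
    refine ⟨y, hyA, {p | ∃ d ∈ D, ∃ n : ℕ, p = d + z n}, ?_, ?_, ?_, ?_⟩
    · obtain ⟨d, hd⟩ := hDne
      exact ⟨d + z 0, d, hd, 0, rfl⟩
    · rintro _ ⟨d1, hd1, n1, rfl⟩ _ ⟨d2, hd2, n2, rfl⟩
      obtain ⟨d3, hd3, h31, h32⟩ := hDdir d1 hd1 d2 hd2
      refine ⟨d3 + z (max n1 n2), ⟨d3, hd3, _, rfl⟩, ?_, ?_⟩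
      · exact add_le_add h31 (hzanti (le_max_left _ _))
      · exact add_le_add h32 (hzanti (le_max_right _ _))
    · constructor
      · rintro _ ⟨d, hd, n, rfl⟩
        exact add_nonneg (hDglb.1 hd) (hz0 n)
      · intro b hb
        have hbz : ∀ n, b ≤ z n := by
          intro n
          have h : b - z n ≤ 0 := by
            apply hDglb.2
            intro d hd
            exact sub_le_iff_le_add.mpr (hb ⟨d, hd, n, rfl⟩)
          exact sub_nonpos.mp h
        have : b ≤ 0 := hzglb.2 (by rintro _ ⟨n, rfl⟩; exact hbz n)
        simpa using this
    · rintro _ ⟨d, hd, n, rfl⟩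
      obtain ⟨a0, ha0⟩ := hD d hd
      refine ⟨max a0 n, fun m hm => ?_⟩
      have h1 : |x m - l| ≤ d := ha0 m (le_trans (le_max_left _ _) hm)
      have h2 : f m ≤ z n := (hfz m).trans (hzanti (le_trans (le_max_right _ _) hm))
      have key : |y m - l| ≤ |y m - x m| + |x m - l| := by
        have h := abs_add_le (y m - x m) (x m - l)
        rwa [sub_add_sub_cancel] at h
      exact key.trans ((add_le_add h2 h1).trans_eq (add_comm _ _))
end
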